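/- Let p, q ∈ ℝ^d be vectors with non-negative entries satisfying the bracelet condition, and let E be a d×d elementary bistochastic matrix. Then the vectors Ep and Eq also satisfy the bracelet condition. -/

import Mathlib

/-- A `d × d` real matrix is bistochastic (doubly stochastic) if all its entries are
non-negative and each row and each column sums to `1`. -/
def Bistochastic {d : ℕ} (B : Matrix (Fin d) (Fin d) ℝ) : Prop :=
  (∀ j k, 0 ≤ B j k) ∧ (∀ j, ∑ k, B j k = 1) ∧ (∀ k, ∑ j, B j k = 1)

/-- A bistochastic matrix is bracelet if for every pair of columns `k, l` and every `j₀`,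
`2 √(B j₀ k * B j₀ l) ≤ ∑ j, √(B j k * B j l)` (equivalently, twice the maximum is at most
the sum), and the analogous condition holds for every pair of rows. -/
def Bracelet {d : ℕ} (B : Matrix (Fin d) (Fin d) ℝ) : Prop :=
  Bistochastic B ∧
  (∀ k l j₀ : Fin d, 2 * Real.sqrt (B j₀ k * B j₀ l) ≤ ∑ j, Real.sqrt (B j k * B j l)) ∧
  (∀ j k l₀ : Fin d, 2 * Real.sqrt (B j l₀ * B k l₀) ≤ ∑ l, Real.sqrt (B j l * B k l))

/-- Two vectors `p, q` satisfy the bracelet condition if for every `k`,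
`√(p k * q k) ≤ ∑_{j ≠ k} √(p j * q j)`. -/
def VecBracelet {d : ℕ} (p q : Fin d → ℝ) : Prop :=
  ∀ k, Real.sqrt (p k * q k) ≤ ∑ j ∈ Finset.univ.erase k, Real.sqrt (p j * q j)

/-- A `d × d` bistochastic matrix `E` is elementary if `E k k = 1` for at least `d - 2`
indices `k`. -/
def Elementary {d : ℕ} (E : Matrix (Fin d) (Fin d) ℝ) : Prop :=
  Bistochastic E ∧ ∃ S : Finset (Fin d), d - 2 ≤ S.card ∧ ∀ k ∈ S, E k k = 1

/-- If `p, q` have non-negative entries and satisfy the bracelet condition, and `E` is an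
elementary bistochastic matrix, then `E p` and `E q` satisfy the bracelet condition. -/

lemma sqrt_mix_ge (t u x1 x2 y1 y2 : ℝ) (ht : 0 ≤ t) (hu : 0 ≤ u)
    (hx1 : 0 ≤ x1) (hx2 : 0 ≤ x2) (hy1 : 0 ≤ y1) (hy2 : 0 ≤ y2) :
    t * Real.sqrt (x1 * y1) + u * Real.sqrt (x2 * y2) ≤
      Real.sqrt ((t * x1 + u * x2) * (t * y1 + u * y2)) := by
  have h1 : Real.sqrt (x1*y1) ^ 2 = x1*y1 := Real.sq_sqrt (by positivity)
  have h2 : Real.sqrt (x2*y2) ^ 2 = x2*y2 := Real.sq_sqrt (by positivity)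
  have h3 : Real.sqrt (x1*y2) ^ 2 = x1*y2 := Real.sq_sqrt (by positivity)
  have h4 : Real.sqrt (x2*y1) ^ 2 = x2*y1 := Real.sq_sqrt (by positivity)
  have hcd : Real.sqrt (x1*y1) * Real.sqrt (x2*y2)
      = Real.sqrt (x1*y2) * Real.sqrt (x2*y1) := by
    rw [← Real.sqrt_mul (by positivity), ← Real.sqrt_mul (by positivity)]
    ring_nf
  have hlhs : 0 ≤ t * Real.sqrt (x1 * y1) + u * Real.sqrt (x2 * y2) := by positivity
  rw [Real.le_sqrt hlhs (by positivity)]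
  calc (t * Real.sqrt (x1*y1) + u * Real.sqrt (x2*y2)) ^ 2
      = t^2 * (Real.sqrt (x1*y1))^2 + 2*t*u*(Real.sqrt (x1*y1) * Real.sqrt (x2*y2))
        + u^2 * (Real.sqrt (x2*y2))^2 := by ring
    _ = t^2 * (x1*y1) + 2*t*u*(Real.sqrt (x1*y2) * Real.sqrt (x2*y1)) + u^2 * (x2*y2) := by
        rw [h1, h2, hcd]
    _ ≤ t^2 * (x1*y1) + t*u*((Real.sqrt (x1*y2))^2 + (Real.sqrt (x2*y1))^2)
        + u^2 * (x2*y2) := by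
        nlinarith [mul_nonneg (mul_nonneg ht hu)
          (sq_nonneg (Real.sqrt (x1*y2) - Real.sqrt (x2*y1)))]
    _ = (t * x1 + u * x2) * (t * y1 + u * y2) := by rw [h3, h4]; ring

lemma mix_diff_le (t u pa pb qa qb R : ℝ) (ht : 0 ≤ t) (hu : 0 ≤ u) (htu : t + u = 1)
    (hpa : 0 ≤ pa) (hpb : 0 ≤ pb) (hqa : 0 ≤ qa) (hqb : 0 ≤ qb) (hR : 0 ≤ R)
    (h1 : Real.sqrt (pa*qa) - Real.sqrt (pb*qb) ≤ R)
    (h2 : Real.sqrt (pb*qb) - Real.sqrt (pa*qa) ≤ R) :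
    Real.sqrt ((t*pa+u*pb)*(t*qa+u*qb)) - Real.sqrt ((u*pa+t*pb)*(u*qa+t*qb)) ≤ R := by
  set α := Real.sqrt (pa*qa) with hα
  set β := Real.sqrt (pb*qb) with hβ
  set A := Real.sqrt ((t*pa+u*pb)*(t*qa+u*qb)) with hA
  set B := Real.sqrt ((u*pa+t*pb)*(u*qa+t*qb)) with hB
  rcases le_or_gt A B with h | h
  · linarith
  · have hBnn : 0 ≤ B := Real.sqrt_nonneg _
    have hABpos : 0 < A + B := by linarith
    have hA2 : A ^ 2 = (t*pa+u*pb)*(t*qa+u*qb) := Real.sq_sqrt (by positivity)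
    have hB2 : B ^ 2 = (u*pa+t*pb)*(u*qa+t*qb) := Real.sq_sqrt (by positivity)
    have hα2 : α ^ 2 = pa*qa := Real.sq_sqrt (by positivity)
    have hβ2 : β ^ 2 = pb*qb := Real.sq_sqrt (by positivity)
    have hdiff : A ^ 2 - B ^ 2 = (t - u) * (α - β) * ((t + u) * (α + β)) := by
      rw [hA2, hB2]
      linear_combination (u^2 - t^2) * hα2 + (t^2 - u^2) * hβ2
    have hαβA : α + β ≤ A + B := by
      have h5 := sqrt_mix_ge t u pa pb qa qb ht hu hpa hpb hqa hqb
      have h6 := sqrt_mix_ge u t pa pb qa qb hu ht hpa hpb hqa hqb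
      rw [← hA] at h5; rw [← hB] at h6
      nlinarith
    have hαnn : 0 ≤ α := Real.sqrt_nonneg _
    have hβnn : 0 ≤ β := Real.sqrt_nonneg _
    have hkey : (t - u) * (α - β) ≤ R := by
      rcases le_total β α with hc | hc
      · nlinarith [mul_le_mul_of_nonneg_right (show t - u ≤ 1 by linarith)
          (sub_nonneg.mpr hc)]
      · nlinarith [mul_le_mul_of_nonneg_right (show u - t ≤ 1 by linarith)
          (sub_nonneg.mpr hc)]
    have hmain : (A - B) * (A + B) ≤ R * (A + B) := by
      have e1 : (A - B) * (A + B) = A ^ 2 - B ^ 2 := by ring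
      rw [e1, hdiff, htu, one_mul]
      calc (t - u) * (α - β) * (α + β) ≤ R * (α + β) :=
            mul_le_mul_of_nonneg_right hkey (by linarith)
        _ ≤ R * (A + B) := mul_le_mul_of_nonneg_left hαβA hR
    have := (mul_le_mul_iff_left₀ hABpos).mp hmain
    linarith

theorem elementary_preserves_vecBracelet {d : ℕ} (p q : Fin d → ℝ)
    (hp : ∀ j, 0 ≤ p j) (hq : ∀ j, 0 ≤ q j) (hpq : VecBracelet p q)
    (E : Matrix (Fin d) (Fin d) ℝ) (hE : Elementary E) :
    VecBracelet (E.mulVec p) (E.mulVec q) := by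
  obtain ⟨⟨hnn, hrow, hcol⟩, S, hScard, hSdiag⟩ := hE
  -- rows and columns indexed by S are standard basis vectors
  have hrow0 : ∀ k ∈ S, ∀ j, j ≠ k → E k j = 0 := by
    intro k hk j hj
    have h := hrow k
    rw [← Finset.add_sum_erase _ _ (Finset.mem_univ k), hSdiag k hk] at h
    have h0 : ∑ j ∈ Finset.univ.erase k, E k j = 0 := by linarith
    exact (Finset.sum_eq_zero_iff_of_nonneg (fun j _ => hnn k j)).mp h0 j
      (Finset.mem_erase.mpr ⟨hj, Finset.mem_univ j⟩)
  have hcol0 : ∀ k ∈ S, ∀ j, j ≠ k → E j k = 0 := by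
    intro k hk j hj
    have h := hcol k
    rw [← Finset.add_sum_erase _ _ (Finset.mem_univ k), hSdiag k hk] at h
    have h0 : ∑ j ∈ Finset.univ.erase k, E j k = 0 := by linarith
    exact (Finset.sum_eq_zero_iff_of_nonneg (fun j _ => hnn j k)).mp h0 j
      (Finset.mem_erase.mpr ⟨hj, Finset.mem_univ j⟩)
  have hfix : ∀ (v : Fin d → ℝ), ∀ k ∈ S, E.mulVec v k = v k := by
    intro v k hk
    show ∑ j, E k j * v j = v k
    rw [Finset.sum_eq_single k (fun j _ hj => by rw [hrow0 k hk j hj]; ring)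
      (fun h => absurd (Finset.mem_univ k) h), hSdiag k hk, one_mul]
  have hcompl : Sᶜ.card ≤ 2 := by
    have h1 := Finset.card_compl S
    have h2 : S.card ≤ d := by
      simpa using Finset.card_le_card (Finset.subset_univ S)
    simp only [Fintype.card_fin] at h1
    omega
  have hcases : Sᶜ.card = 0 ∨ Sᶜ.card = 1 ∨ Sᶜ.card = 2 := by omega
  rcases hcases with h0 | h1 | h2
  · -- S = univ : E acts as identity
    have hall : ∀ k, k ∈ S := by
      intro k
      by_contra hk
      have : k ∈ Sᶜ := Finset.mem_compl.mpr hk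
      rw [Finset.card_eq_zero.mp h0] at this
      exact absurd this (Finset.notMem_empty k)
    have hep : E.mulVec p = p := funext fun k => hfix p k (hall k)
    have heq : E.mulVec q = q := funext fun k => hfix q k (hall k)
    rw [hep, heq]; exact hpq
  · -- Sᶜ = {a} : E still acts as identity
    obtain ⟨a, ha⟩ := Finset.card_eq_one.mp h1
    have hmem : ∀ k, k ≠ a → k ∈ S := by
      intro k hk
      by_contra hks
      have : k ∈ Sᶜ := Finset.mem_compl.mpr hks
      rw [ha, Finset.mem_singleton] at this
      exact hk this
    have hEaa : E a a = 1 := by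
      have h := hrow a
      rw [← Finset.add_sum_erase _ _ (Finset.mem_univ a)] at h
      have h0 : ∑ j ∈ Finset.univ.erase a, E a j = 0 := by
        apply Finset.sum_eq_zero
        intro j hj
        have hja : j ≠ a := (Finset.mem_erase.mp hj).1
        exact hcol0 j (hmem j hja) a (Ne.symm hja)
      linarith
    have hfix' : ∀ (v : Fin d → ℝ), ∀ k, E.mulVec v k = v k := by
      intro v k
      by_cases hk : k = a
      · subst hk
        show ∑ j, E k j * v j = v k
        rw [Finset.sum_eq_single k
          (fun j _ hj => by rw [hcol0 j (hmem j hj) k (Ne.symm hj)]; ring)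
          (fun h => absurd (Finset.mem_univ k) h), hEaa, one_mul]
      · exact hfix v k (hmem k hk)
    have hep : E.mulVec p = p := funext fun k => hfix' p k
    have heq : E.mulVec q = q := funext fun k => hfix' q k
    rw [hep, heq]; exact hpq
  · -- Sᶜ = {a, b} : E mixes coordinates a and b
    obtain ⟨a, b, hab, hT⟩ := Finset.card_eq_two.mp h2
    have hmem : ∀ k, k ≠ a → k ≠ b → k ∈ S := by
      intro k hka hkb
      by_contra hks
      have : k ∈ Sᶜ := Finset.mem_compl.mpr hks
      rw [hT] at this
      rcases Finset.mem_insert.mp this with h | h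
      · exact hka h
      · exact hkb (Finset.mem_singleton.mp h)
    -- entries of rows a, b vanish outside columns a, b; and dually
    have h_ra : ∀ j, j ≠ a → j ≠ b → E a j = 0 :=
      fun j h1 h2 => hcol0 j (hmem j h1 h2) a (Ne.symm h1)
    have h_rb : ∀ j, j ≠ a → j ≠ b → E b j = 0 :=
      fun j h1 h2 => hcol0 j (hmem j h1 h2) b (Ne.symm h2)
    have h_ca : ∀ j, j ≠ a → j ≠ b → E j a = 0 :=
      fun j h1 h2 => hrow0 j (hmem j h1 h2) a (Ne.symm h1)
    have hpairsum : ∀ f : Fin d → ℝ, (∀ j, j ≠ a → j ≠ b → f j = 0) →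
        ∑ j, f j = f a + f b := by
      intro f hf
      rw [← Finset.sum_sdiff (Finset.subset_univ ({a, b} : Finset (Fin d))),
        Finset.sum_pair hab]
      have : ∑ j ∈ Finset.univ \ ({a, b} : Finset (Fin d)), f j = 0 := by
        apply Finset.sum_eq_zero
        intro j hj
        simp only [Finset.mem_sdiff, Finset.mem_insert, Finset.mem_singleton] at hj
        exact hf j (fun h => hj.2 (Or.inl h)) (fun h => hj.2 (Or.inr h))
      rw [this, zero_add]
    set t := E a a with htdef
    set u := E a b with hudef
    have ht : 0 ≤ t := hnn a a
    have hu : 0 ≤ u := hnn a b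
    have htu : t + u = 1 := by
      have h := hrow a
      rwa [hpairsum (fun j => E a j) h_ra] at h
    have hba : E b a = u := by
      have h := hcol a
      rw [hpairsum (fun j => E j a) h_ca] at h
      linarith
    have hbb : E b b = t := by
      have h := hrow b
      rw [hpairsum (fun j => E b j) h_rb, hba] at h
      linarith
    have hva : ∀ v : Fin d → ℝ, E.mulVec v a = t * v a + u * v b := by
      intro v
      show ∑ j, E a j * v j = _
      rw [hpairsum (fun j => E a j * v j) (fun j h1 h2 => by show E a j * v j = 0; rw [h_ra j h1 h2]; ring)]
    have hvb : ∀ v : Fin d → ℝ, E.mulVec v b = u * v a + t * v b := by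
      intro v
      show ∑ j, E b j * v j = _
      rw [hpairsum (fun j => E b j * v j) (fun j h1 h2 => by show E b j * v j = 0; rw [h_rb j h1 h2]; ring),
        hba, hbb]
    have hvo : ∀ (v : Fin d → ℝ) k, k ≠ a → k ≠ b → E.mulVec v k = v k :=
      fun v k h1 h2 => hfix v k (hmem k h1 h2)
    -- abbreviations
    set s : Fin d → ℝ := fun j => Real.sqrt (p j * q j) with hsdef
    set s' : Fin d → ℝ := fun j => Real.sqrt (E.mulVec p j * E.mulVec q j) with hs'def
    set R : ℝ := ∑ j ∈ Finset.univ \ ({a, b} : Finset (Fin d)), s j with hRdef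
    have hR : 0 ≤ R := Finset.sum_nonneg fun j _ => Real.sqrt_nonneg _
    set α := Real.sqrt (p a * q a) with hαdef
    set β := Real.sqrt (p b * q b) with hβdef
    set A := Real.sqrt ((t * p a + u * p b) * (t * q a + u * q b)) with hAdef
    set B := Real.sqrt ((u * p a + t * p b) * (u * q a + t * q b)) with hBdef
    have hs'a : s' a = A := by simp only [hs'def, hva p, hva q, hAdef]
    have hs'b : s' b = B := by simp only [hs'def, hvb p, hvb q, hBdef]
    have hsum : ∑ j, s j = R + α + β := by
      rw [← Finset.sum_sdiff (Finset.subset_univ ({a, b} : Finset (Fin d))),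
        Finset.sum_pair hab, ← hRdef]
      ring
    have hsum' : ∑ j, s' j = R + A + B := by
      rw [← Finset.sum_sdiff (Finset.subset_univ ({a, b} : Finset (Fin d))),
        Finset.sum_pair hab, hs'a, hs'b]
      have : ∑ j ∈ Finset.univ \ ({a, b} : Finset (Fin d)), s' j = R := by
        apply Finset.sum_congr rfl
        intro j hj
        simp only [Finset.mem_sdiff, Finset.mem_insert, Finset.mem_singleton] at hj
        have h1 : j ≠ a := fun h => hj.2 (Or.inl h)
        have h2 : j ≠ b := fun h => hj.2 (Or.inr h)
        simp only [hs'def, hsdef, hvo p j h1 h2, hvo q j h1 h2]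
      rw [this]
      ring
    -- consequences of the hypothesis on p, q
    have hhyp : ∀ k, 2 * s k ≤ ∑ j, s j := by
      intro k
      have h := hpq k
      rw [Finset.sum_erase_eq_sub (Finset.mem_univ k)] at h
      simp only [← hsdef] at h
      linarith
    have hαR : α - β ≤ R := by have := hhyp a; rw [hsum] at this; simpa [hsdef] using by linarith [this]
    have hβR : β - α ≤ R := by have := hhyp b; rw [hsum] at this; simpa [hsdef] using by linarith [this]
    -- Cauchy-Schwarz bounds
    have hCSa : t * α + u * β ≤ A :=
      sqrt_mix_ge t u (p a) (p b) (q a) (q b) ht hu (hp a) (hp b) (hq a) (hq b)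
    have hCSb : u * α + t * β ≤ B :=
      sqrt_mix_ge u t (p a) (p b) (q a) (q b) hu ht (hp a) (hp b) (hq a) (hq b)
    have hαβAB : α + β ≤ A + B := by
      have e : (t * α + u * β) + (u * α + t * β) = α + β := by
        linear_combination (α + β) * htu
      linarith
    have hABR : A - B ≤ R :=
      mix_diff_le t u (p a) (p b) (q a) (q b) R ht hu htu
        (hp a) (hp b) (hq a) (hq b) hR hαR hβR
    have hBAR : B - A ≤ R := by
      have h := mix_diff_le u t (p a) (p b) (q a) (q b) R hu ht (by linarith)
        (hp a) (hp b) (hq a) (hq b) hR hαR hβR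
      exact h
    -- finish
    intro k
    rw [Finset.sum_erase_eq_sub (Finset.mem_univ k)]
    have hsum'2 : ∑ j, Real.sqrt (E.mulVec p j * E.mulVec q j) = R + A + B := hsum'
    rw [hsum'2]
    by_cases hka : k = a
    · subst hka
      have : Real.sqrt (E.mulVec p k * E.mulVec q k) = A := hs'a
      rw [this]
      linarith
    · by_cases hkb : k = b
      · subst hkb
        have : Real.sqrt (E.mulVec p k * E.mulVec q k) = B := hs'b
        rw [this]
        linarith
      · have : Real.sqrt (E.mulVec p k * E.mulVec q k) = s k := by
          simp only [hsdef, hvo p k hka hkb, hvo q k hka hkb]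
        rw [this]
        have := hhyp k
        rw [hsum] at this
        linarith
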